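/- Let n ≥ 2 be an integer and let w : {1,…,n} → ℝ be nonincreasing (w_1 ≥ w_2 ≥ … ≥ w_n). For a badge assignment r : {1,…,n} → ℕ and each i, let n_g(i,r) = |{j ≠ i : r_j > r_i}| and n_e(i,r) = |{j ≠ i : r_j = r_i}|, and define σ_i(r) = 1 − n_g(i,r)/(n−1) − (1/2)·n_e(i,r)/(n−1). Then for every badge assignment r, ∑_{i=1}^{n} w_i·σ_i(r) ≤ ∑_{i=1}^{n} w_i·(1 − (i−1)/(n−1)); that is, assigning all users distinct badges in decreasing order of weight maximizes the virtual surplus when ties are split with parameter β = 1/2. -/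
import Mathlib


open Finset

/-- Status value of user `i` under badge assignment `r` with tie-breaking parameter
`β = 1/2`: `1 - n_g/(n-1) - (1/2)·n_e/(n-1)`, where `n_g` counts other users with a
strictly higher badge and `n_e` counts other users with an equal badge. -/
noncomputable def statusHalfTies (n : ℕ) (r : Fin n → ℕ) (i : Fin n) : ℝ :=
  1 - ((Finset.univ.filter (fun j => j ≠ i ∧ r i < r j)).card : ℝ) / (n - 1)
    - (1/2) * ((Finset.univ.filter (fun j => j ≠ i ∧ r j = r i)).card : ℝ) / (n - 1)

theorem distinct_badges_optimal_half_ties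
    (n : ℕ) (hn : 2 ≤ n)
    (w : Fin n → ℝ)
    (hw_anti : ∀ i j : Fin n, i ≤ j → w j ≤ w i) :
    ∀ r : Fin n → ℕ,
      ∑ i, w i * statusHalfTies n r i ≤ ∑ i, w i * (1 - (i : ℕ) / (n - 1)) := by
  intro r
  have hn1 : (0:ℝ) < (n:ℝ) - 1 := by
    have : (2:ℝ) ≤ (n:ℝ) := by exact_mod_cast hn
    linarith
  -- combined "rank penalty"
  set s : Fin n → ℝ := fun i =>
    ((Finset.univ.filter (fun j => j ≠ i ∧ r i < r j)).card : ℝ)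
      + (1/2) * ((Finset.univ.filter (fun j => j ≠ i ∧ r j = r i)).card : ℝ) with hs_def
  -- pairwise contribution function
  set f : Fin n → Fin n → ℝ := fun i j =>
    (if r i < r j then (1:ℝ) else 0) + (1/2) * (if r j = r i then (1:ℝ) else 0) with hf_def
  -- counting lemma: card of filter over erase
  have hfilter : ∀ (i : Fin n) (p : Fin n → Prop) [DecidablePred p],
      Finset.univ.filter (fun j => j ≠ i ∧ p j) = (Finset.univ.erase i).filter p := by
    intro i p _
    ext j
    simp [Finset.mem_erase, and_comm]
  have hs : ∀ i, s i = ∑ j ∈ Finset.univ.erase i, f i j := by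
    intro i
    have h1 : ((Finset.univ.filter (fun j => j ≠ i ∧ r i < r j)).card : ℝ)
        = ∑ j ∈ Finset.univ.erase i, (if r i < r j then (1:ℝ) else 0) := by
      rw [Finset.sum_boole, hfilter i (fun j => r i < r j)]
    have h2 : ((Finset.univ.filter (fun j => j ≠ i ∧ r j = r i)).card : ℝ)
        = ∑ j ∈ Finset.univ.erase i, (if r j = r i then (1:ℝ) else 0) := by
      rw [Finset.sum_boole, hfilter i (fun j => r j = r i)]
    rw [hs_def]
    simp only [h1, h2, hf_def, Finset.mul_sum, ← Finset.sum_add_distrib]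
  -- count of indices below i
  have hcount : ∀ i : Fin n,
      ∑ j ∈ Finset.univ.erase i, (if j < i then w i else 0) = w i * (i : ℕ) := by
    intro i
    have : (Finset.univ.erase i).filter (fun j => j < i) = Finset.Iio i := by
      ext j
      simp only [Finset.mem_filter, Finset.mem_erase, Finset.mem_univ, Finset.mem_Iio,
        and_true, true_and]
      constructor
      · rintro ⟨_, h⟩; exact h
      · intro h; exact ⟨ne_of_lt h, h⟩
    rw [Finset.sum_ite, Finset.sum_const, Finset.sum_const_zero, this, Fin.card_Iio]
    simp [mul_comm]
  -- the asymmetric term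
  set F : Fin n → Fin n → ℝ := fun i j => w i * f i j - (if j < i then w i else 0) with hF_def
  -- pairwise nonnegativity after symmetrization
  have pair : ∀ i j : Fin n, j ≠ i → 0 ≤ F i j + F j i := by
    intro i j hji
    have hij : i ≠ j := hji.symm
    have key1 : (if j < i then w i else 0) + (if i < j then w j else 0) ≤ min (w i) (w j) := by
      rcases lt_trichotomy i j with h | h | h
      · have : w j ≤ w i := hw_anti i j h.le
        simp [h, not_lt_of_gt h, min_eq_right this]
      · exact absurd h hij
      · have : w i ≤ w j := hw_anti j i h.le
        simp [h, not_lt_of_gt h, min_eq_left this]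
    have hf01 : 0 ≤ f i j ∧ f i j ≤ 1 ∧ f i j + f j i = 1 := by
      rcases lt_trichotomy (r i) (r j) with h | h | h
      · simp [hf_def, h, h.ne, h.ne', not_lt_of_gt h]
      · simp [hf_def, h, lt_irrefl]
        norm_num
      · simp [hf_def, h, h.ne, h.ne', not_lt_of_gt h]
    obtain ⟨h0, h1, hsum⟩ := hf01
    have hmin1 : min (w i) (w j) ≤ w i := min_le_left _ _
    have hmin2 : min (w i) (w j) ≤ w j := min_le_right _ _
    have h0' : 0 ≤ f j i := by linarith
    have key2 : min (w i) (w j) ≤ w i * f i j + w j * f j i := by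
      set m := min (w i) (w j) with hm
      have e : f i j * (w i - m) + f j i * (w j - m) = w i * f i j + w j * f j i - m := by
        linear_combination (-m) * hsum
      have t1 : 0 ≤ f i j * (w i - m) := mul_nonneg h0 (sub_nonneg.mpr hmin1)
      have t2 : 0 ≤ f j i * (w j - m) := mul_nonneg h0' (sub_nonneg.mpr hmin2)
      linarith
    simp only [hF_def]
    linarith
  -- symmetrization of the double sum
  have swap : ∑ i, ∑ j ∈ Finset.univ.erase i, F i j
      = ∑ i, ∑ j ∈ Finset.univ.erase i, F j i := by
    apply Finset.sum_comm'
    intro x y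
    simp [Finset.mem_erase, ne_comm, and_comm]
  have double_nonneg : 0 ≤ ∑ i, ∑ j ∈ Finset.univ.erase i, F i j := by
    have h2 : 0 ≤ ∑ i, ∑ j ∈ Finset.univ.erase i, (F i j + F j i) := by
      apply Finset.sum_nonneg
      intro i _
      apply Finset.sum_nonneg
      intro j hj
      exact pair i j (Finset.ne_of_mem_erase hj)
    have h3 : ∑ i, ∑ j ∈ Finset.univ.erase i, (F i j + F j i)
        = (∑ i, ∑ j ∈ Finset.univ.erase i, F i j)
          + ∑ i, ∑ j ∈ Finset.univ.erase i, F j i := by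
      simp [Finset.sum_add_distrib]
    rw [h3, ← swap] at h2
    linarith
  -- key inequality
  have key : ∑ i, w i * ((i : ℕ) : ℝ) ≤ ∑ i, w i * s i := by
    have e1 : ∑ i, w i * s i = ∑ i, ∑ j ∈ Finset.univ.erase i, w i * f i j := by
      refine Finset.sum_congr rfl fun i _ => ?_
      rw [hs i, Finset.mul_sum]
    have e2 : ∑ i, w i * ((i : ℕ) : ℝ)
        = ∑ i, ∑ j ∈ Finset.univ.erase i, (if j < i then w i else 0) := by
      refine Finset.sum_congr rfl fun i _ => ?_
      rw [hcount i]
    rw [e1, e2]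
    have := double_nonneg
    simp only [hF_def, Finset.sum_sub_distrib] at this
    linarith
  -- conclude
  have expandL : ∀ i : Fin n, w i * statusHalfTies n r i = w i - w i * s i / ((n:ℝ) - 1) := by
    intro i
    unfold statusHalfTies
    rw [hs_def]
    field_simp
    ring
  have expandR : ∀ i : Fin n,
      w i * (1 - ((i : ℕ) : ℝ) / ((n:ℝ) - 1)) = w i - w i * ((i : ℕ) : ℝ) / ((n:ℝ) - 1) := by
    intro i; ring
  calc ∑ i, w i * statusHalfTies n r i
      = ∑ i, (w i - w i * s i / ((n:ℝ) - 1)) := Finset.sum_congr rfl fun i _ => expandL i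
    _ = (∑ i, w i) - (∑ i, w i * s i) / ((n:ℝ) - 1) := by
        rw [Finset.sum_sub_distrib, Finset.sum_div]
    _ ≤ (∑ i, w i) - (∑ i, w i * ((i : ℕ) : ℝ)) / ((n:ℝ) - 1) := by
        gcongr
    _ = ∑ i, w i * (1 - ((i : ℕ) : ℝ) / ((n:ℝ) - 1)) := by
        have h : ∑ i, w i * (1 - ((i : ℕ) : ℝ) / ((n:ℝ) - 1))
            = ∑ i, (w i - w i * ((i : ℕ) : ℝ) / ((n:ℝ) - 1)) :=
          Finset.sum_congr rfl fun i _ => expandR i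
        rw [h, Finset.sum_sub_distrib, Finset.sum_div]
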